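/- Assume θ ≥ 0 and a > 0, and additionally a < θ whenever θ > 0. Then for every c ∈ S¹_θ the following set identity holds inside Ω: d̂(a) ∩ T_c(q̂(a)) = ĉ(a) if c = 0; d̂(a) ∩ T_c(q̂(a)) = K(a) if c = [a]; and d̂(a) ∩ T_c(q̂(a)) = ∅ for all other c. (Under the stated hypotheses [a] ≠ 0 in S¹_θ, so the three cases are mutually exclusive.) -/
import Mathlib


/-!
Fix `θ ≥ 0` and let `S¹_θ := ℝ/θℤ` be `AddCircle θ` (for `θ = 0` this is `ℝ`).
A point of the ambient space `ℝ × S¹_θ × ℝ × ℝ` is written `(u, t, υ, τ)`; all the sets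
below are contained in `Ω = {τ > 0}`.  These are the conified cone sets `ĉ(a)`, `d̂(a)`,
`q̂(a)`, and `K(a) = closure of l̂(a)` of the paper, together with the translation `T_c`.
-/

/-- The set `ĉ(a) = {(0,0,τυ,τ) | -1 ≤ υ ≤ 0, τ > 0} ∪ {(u,0,0,τ) | 0 ≤ u ≤ a, τ > 0}
∪ {(u,[u],-τ,τ) | 0 ≤ u ≤ a, τ > 0}`. -/
def chat (θ a : ℝ) : Set (ℝ × AddCircle θ × ℝ × ℝ) :=
  {q | ∃ υ τ : ℝ, 0 < τ ∧ -1 ≤ υ ∧ υ ≤ 0 ∧ q = (0, 0, τ * υ, τ)} ∪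
    {q | ∃ u τ : ℝ, 0 < τ ∧ 0 ≤ u ∧ u ≤ a ∧ q = (u, 0, 0, τ)} ∪
    {q | ∃ u τ : ℝ, 0 < τ ∧ 0 ≤ u ∧ u ≤ a ∧ q = (u, (u : AddCircle θ), -τ, τ)}

/-- The set `d̂(a) = ĉ(a) ∪ {(a,0,υ,τ) | υ > 0, τ > 0} ∪ {(a,[a],υ,τ) | υ > -τ, τ > 0}`. -/
def dhat (θ a : ℝ) : Set (ℝ × AddCircle θ × ℝ × ℝ) :=
  chat θ a ∪ {q | ∃ υ τ : ℝ, 0 < τ ∧ 0 < υ ∧ q = (a, 0, υ, τ)} ∪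
    {q | ∃ υ τ : ℝ, 0 < τ ∧ -τ < υ ∧ q = (a, (a : AddCircle θ), υ, τ)}

/-- The set `q̂(a) = ĉ(a) ∪ {(a,0,υ,τ) | υ < 0, τ > 0} ∪ {(a,[a],υ,τ) | υ < -τ, τ > 0}`. -/
def qhat (θ a : ℝ) : Set (ℝ × AddCircle θ × ℝ × ℝ) :=
  chat θ a ∪ {q | ∃ υ τ : ℝ, 0 < τ ∧ υ < 0 ∧ q = (a, 0, υ, τ)} ∪
    {q | ∃ υ τ : ℝ, 0 < τ ∧ υ < -τ ∧ q = (a, (a : AddCircle θ), υ, τ)}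

/-- The set `K(a) = {(a,[a],υ,τ) | -τ ≤ υ ≤ 0, τ > 0}`, the closure in `Ω` of `l̂(a)`. -/
def Kset (θ a : ℝ) : Set (ℝ × AddCircle θ × ℝ × ℝ) :=
  {q | ∃ υ τ : ℝ, 0 < τ ∧ -τ ≤ υ ∧ υ ≤ 0 ∧ q = (a, (a : AddCircle θ), υ, τ)}

/-- The translation `T_c : (u, t, υ, τ) ↦ (u, t + c, υ, τ)`. -/
noncomputable def coneTranslate (θ : ℝ) (c : AddCircle θ) (q : ℝ × AddCircle θ × ℝ × ℝ) :
    ℝ × AddCircle θ × ℝ × ℝ :=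
  (q.1, q.2.1 + c, q.2.2.1, q.2.2.2)

section Aux

variable {θ a : ℝ}

private lemma coe_a_ne_zero (hθ : 0 ≤ θ) (ha : 0 < a) (haθ : 0 < θ → a < θ) :
    (a : AddCircle θ) ≠ 0 := by
  intro h
  rw [AddCircle.coe_eq_zero_iff] at h
  obtain ⟨n, hn⟩ := h
  rcases hθ.lt_or_eq with h1 | h1
  · have h2 := haθ h1
    have hn' : (n : ℝ) * θ = a := by simpa [zsmul_eq_mul] using hn
    rcases (by omega : n ≤ 0 ∨ 1 ≤ n) with h3 | h3
    · have : (n : ℝ) ≤ 0 := by exact_mod_cast h3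
      nlinarith
    · have : (1 : ℝ) ≤ (n : ℝ) := by exact_mod_cast h3
      nlinarith
  · rw [← h1] at hn
    simp at hn
    linarith

private lemma sub_helper {G : Type*} [AddCommGroup G] {t c y : G} (h : t + -c = y) :
    t - y = c := by rw [← h]; abel

private lemma mem_chat_iff {u v τ : ℝ} {t : AddCircle θ} :
    (u, t, v, τ) ∈ chat θ a ↔
      (0 < τ ∧ u = 0 ∧ t = 0 ∧ -τ ≤ v ∧ v ≤ 0) ∨
      (0 < τ ∧ 0 ≤ u ∧ u ≤ a ∧ t = 0 ∧ v = 0) ∨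
      (0 < τ ∧ 0 ≤ u ∧ u ≤ a ∧ t = (u : AddCircle θ) ∧ v = -τ) := by
  unfold chat
  simp only [Set.mem_union, Set.mem_setOf_eq, Prod.mk.injEq]
  constructor
  · rintro ((⟨υ, τ', hτ, h1, h2, hu, ht, hv, hτ'⟩ | ⟨u', τ', hτ, h0, h1, hu, ht, hv, hτ'⟩) |
      ⟨u', τ', hτ, h0, h1, hu, ht, hv, hτ'⟩)
    · refine Or.inl ⟨by linarith, hu, ht, ?_, ?_⟩ <;> nlinarith
    · subst hu; subst hτ'
      exact Or.inr (Or.inl ⟨hτ, h0, h1, ht, hv⟩)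
    · subst hu; subst hτ'
      exact Or.inr (Or.inr ⟨hτ, h0, h1, ht, hv⟩)
  · rintro (⟨hτ, hu, ht, hv1, hv2⟩ | ⟨hτ, h0, h1, ht, hv⟩ | ⟨hτ, h0, h1, ht, hv⟩)
    · refine Or.inl (Or.inl ⟨v / τ, τ, hτ, ?_, ?_, hu, ht, ?_, rfl⟩)
      · rw [le_div_iff₀ hτ]; linarith
      · rw [div_le_iff₀ hτ]; linarith
      · rw [mul_div_cancel₀ v hτ.ne']
    · exact Or.inl (Or.inr ⟨u, τ, hτ, h0, h1, rfl, ht, hv, rfl⟩)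
    · exact Or.inr ⟨u, τ, hτ, h0, h1, rfl, ht, hv, rfl⟩

private lemma mem_dhat_iff {u v τ : ℝ} {t : AddCircle θ} :
    (u, t, v, τ) ∈ dhat θ a ↔
      ((0 < τ ∧ u = 0 ∧ t = 0 ∧ -τ ≤ v ∧ v ≤ 0) ∨
       (0 < τ ∧ 0 ≤ u ∧ u ≤ a ∧ t = 0 ∧ v = 0) ∨
       (0 < τ ∧ 0 ≤ u ∧ u ≤ a ∧ t = (u : AddCircle θ) ∧ v = -τ)) ∨
      (0 < τ ∧ 0 < v ∧ u = a ∧ t = 0) ∨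
      (0 < τ ∧ -τ < v ∧ u = a ∧ t = (a : AddCircle θ)) := by
  unfold dhat
  simp only [Set.mem_union, Set.mem_setOf_eq, Prod.mk.injEq]
  rw [← mem_chat_iff]
  constructor
  · rintro ((h | ⟨υ, τ', hτ, hv, hu, ht, hv', hτ'⟩) | ⟨υ, τ', hτ, hv, hu, ht, hv', hτ'⟩)
    · exact Or.inl h
    · subst hv'; subst hτ'; exact Or.inr (Or.inl ⟨hτ, hv, hu, ht⟩)
    · subst hv'; subst hτ'; exact Or.inr (Or.inr ⟨hτ, hv, hu, ht⟩)
  · rintro (h | ⟨hτ, hv, hu, ht⟩ | ⟨hτ, hv, hu, ht⟩)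
    · exact Or.inl (Or.inl h)
    · exact Or.inl (Or.inr ⟨v, τ, hτ, hv, hu, ht, rfl, rfl⟩)
    · exact Or.inr ⟨v, τ, hτ, hv, hu, ht, rfl, rfl⟩

private lemma mem_qhat_iff {u v τ : ℝ} {t : AddCircle θ} :
    (u, t, v, τ) ∈ qhat θ a ↔
      ((0 < τ ∧ u = 0 ∧ t = 0 ∧ -τ ≤ v ∧ v ≤ 0) ∨
       (0 < τ ∧ 0 ≤ u ∧ u ≤ a ∧ t = 0 ∧ v = 0) ∨
       (0 < τ ∧ 0 ≤ u ∧ u ≤ a ∧ t = (u : AddCircle θ) ∧ v = -τ)) ∨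
      (0 < τ ∧ v < 0 ∧ u = a ∧ t = 0) ∨
      (0 < τ ∧ v < -τ ∧ u = a ∧ t = (a : AddCircle θ)) := by
  unfold qhat
  simp only [Set.mem_union, Set.mem_setOf_eq, Prod.mk.injEq]
  rw [← mem_chat_iff]
  constructor
  · rintro ((h | ⟨υ, τ', hτ, hv, hu, ht, hv', hτ'⟩) | ⟨υ, τ', hτ, hv, hu, ht, hv', hτ'⟩)
    · exact Or.inl h
    · subst hv'; subst hτ'; exact Or.inr (Or.inl ⟨hτ, hv, hu, ht⟩)
    · subst hv'; subst hτ'; exact Or.inr (Or.inr ⟨hτ, hv, hu, ht⟩)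
  · rintro (h | ⟨hτ, hv, hu, ht⟩ | ⟨hτ, hv, hu, ht⟩)
    · exact Or.inl (Or.inl h)
    · exact Or.inl (Or.inr ⟨v, τ, hτ, hv, hu, ht, rfl, rfl⟩)
    · exact Or.inr ⟨v, τ, hτ, hv, hu, ht, rfl, rfl⟩

private lemma mem_Kset_iff {u v τ : ℝ} {t : AddCircle θ} :
    (u, t, v, τ) ∈ Kset θ a ↔
      0 < τ ∧ -τ ≤ v ∧ v ≤ 0 ∧ u = a ∧ t = (a : AddCircle θ) := by
  unfold Kset
  simp only [Set.mem_setOf_eq, Prod.mk.injEq]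
  constructor
  · rintro ⟨υ, τ', hτ, h1, h2, hu, ht, hv, hτ'⟩
    subst hv; subst hτ'
    exact ⟨hτ, h1, h2, hu, ht⟩
  · rintro ⟨hτ, h1, h2, hu, ht⟩
    exact ⟨v, τ, hτ, h1, h2, hu, ht, rfl, rfl⟩

private lemma mem_translate_image {c : AddCircle θ} {S : Set (ℝ × AddCircle θ × ℝ × ℝ)}
    {u v τ : ℝ} {t : AddCircle θ} :
    (u, t, v, τ) ∈ coneTranslate θ c '' S ↔ (u, t + -c, v, τ) ∈ S := by
  constructor
  · rintro ⟨⟨p1, p2, p3, p4⟩, hp, heq⟩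
    simp only [coneTranslate, Prod.mk.injEq] at heq
    obtain ⟨h1, h2, h3, h4⟩ := heq
    subst h1; subst h3; subst h4
    rw [← h2]
    simpa using hp
  · intro h
    exact ⟨(u, t + -c, v, τ), h, by simp [coneTranslate]⟩

end Aux

/-- For `θ ≥ 0`, `a > 0` with `a < θ` whenever `θ > 0`, and any
`c ∈ S¹_θ`:  `d̂(a) ∩ T_c(q̂(a))` equals `ĉ(a)` if `c = 0`, equals `K(a)` if `c = [a]`,
and is empty for all other `c`. -/
theorem dhat_inter_translate_qhat (θ a : ℝ) (hθ : 0 ≤ θ) (ha : 0 < a)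
    (haθ : 0 < θ → a < θ) (c : AddCircle θ) :
    (c = 0 → dhat θ a ∩ (coneTranslate θ c '' qhat θ a) = chat θ a) ∧
    (c = (a : AddCircle θ) → dhat θ a ∩ (coneTranslate θ c '' qhat θ a) = Kset θ a) ∧
    (c ≠ 0 → c ≠ (a : AddCircle θ) → dhat θ a ∩ (coneTranslate θ c '' qhat θ a) = ∅) := by
  have haz : (a : AddCircle θ) ≠ 0 := coe_a_ne_zero hθ ha haθ
  refine ⟨?_, ?_, ?_⟩
  · rintro rfl
    ext ⟨u, t, v, τ⟩
    simp only [Set.mem_inter_iff, mem_translate_image, neg_zero, add_zero, mem_dhat_iff,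
      mem_qhat_iff, mem_chat_iff]
    constructor
    · rintro ⟨hd, hq⟩
      rcases hd with h | ⟨hτ, hv, hu, ht⟩ | ⟨hτ, hv, hu, ht⟩
      · exact h
      · rcases hq with (⟨hτ', hu', ht', hv1', hv2'⟩ | ⟨hτ', h0', h1', ht', hv'⟩ |
          ⟨hτ', h0', h1', ht', hv'⟩) | ⟨hτ', hv', hu', ht'⟩ | ⟨hτ', hv', hu', ht'⟩ <;> linarith
      · rcases hq with (⟨hτ', hu', ht', hv1', hv2'⟩ | ⟨hτ', h0', h1', ht', hv'⟩ |
          ⟨hτ', h0', h1', ht', hv'⟩) | ⟨hτ', hv', hu', ht'⟩ | ⟨hτ', hv', hu', ht'⟩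
        · linarith
        · exact absurd (ht.symm.trans ht') haz
        · linarith
        · exact absurd (ht.symm.trans ht') haz
        · linarith
    · exact fun h => ⟨Or.inl h, Or.inl h⟩
  · rintro rfl
    ext ⟨u, t, v, τ⟩
    simp only [Set.mem_inter_iff, mem_translate_image, mem_dhat_iff, mem_qhat_iff,
      mem_chat_iff, mem_Kset_iff]
    constructor
    · rintro ⟨hd, hq⟩
      rcases hd with (⟨hτ, hu, ht, hv1, hv2⟩ | ⟨hτ, h0, h1, ht, hv⟩ | ⟨hτ, h0, h1, ht, hv⟩) |
          ⟨hτ, hv, hu, ht⟩ | ⟨hτ, hv, hu, ht⟩ <;>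
        rcases hq with (⟨hτ', hu', ht', hv1', hv2'⟩ | ⟨hτ', h0', h1', ht', hv'⟩ |
          ⟨hτ', h0', h1', ht', hv'⟩) | ⟨hτ', hv', hu', ht'⟩ | ⟨hτ', hv', hu', ht'⟩ <;>
      first
        | linarith
        | exact ⟨hτ, by linarith, by linarith, hu, ht⟩
        | exact ⟨hτ, by linarith, by linarith, hu', by rw [ht, hu']⟩
        | exact absurd (show (a : AddCircle θ) = 0 by
            have h2 := sub_helper ht'
            rw [ht] at h2
            first | rw [hu] at h2 | rw [hu'] at h2 | skip
            simpa using h2.symm) haz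
    · rintro ⟨hτ, hv1, hv2, hu, ht⟩
      have ht0 : t + -((a : ℝ) : AddCircle θ) = 0 := by rw [ht]; abel
      constructor
      · rcases eq_or_lt_of_le hv1 with h | h
        · exact Or.inl (Or.inr (Or.inr ⟨hτ, by linarith, by linarith, by rw [ht, hu], h.symm⟩))
        · exact Or.inr (Or.inr ⟨hτ, h, hu, ht⟩)
      · rcases eq_or_lt_of_le hv2 with h | h
        · exact Or.inl (Or.inr (Or.inl ⟨hτ, by linarith, by linarith, ht0, h⟩))
        · exact Or.inr (Or.inl ⟨hτ, h, hu, ht0⟩)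
  · intro hc0 hca
    ext ⟨u, t, v, τ⟩
    simp only [Set.mem_inter_iff, mem_translate_image, mem_dhat_iff, mem_qhat_iff,
      mem_chat_iff, Set.mem_empty_iff_false, iff_false]
    rintro ⟨hd, hq⟩
    rcases hd with (⟨hτ, hu, ht, hv1, hv2⟩ | ⟨hτ, h0, h1, ht, hv⟩ | ⟨hτ, h0, h1, ht, hv⟩) |
        ⟨hτ, hv, hu, ht⟩ | ⟨hτ, hv, hu, ht⟩ <;>
      rcases hq with (⟨hτ', hu', ht', hv1', hv2'⟩ | ⟨hτ', h0', h1', ht', hv'⟩ |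
        ⟨hτ', h0', h1', ht', hv'⟩) | ⟨hτ', hv', hu', ht'⟩ | ⟨hτ', hv', hu', ht'⟩ <;>
    first
      | linarith
      | exact hc0 (by
          have h2 := sub_helper ht'
          rw [ht] at h2
          first | rw [hu] at h2 | rw [hu'] at h2 | skip
          simpa using h2.symm)
      | exact hca (by
          have h2 := sub_helper ht'
          rw [ht] at h2
          first | rw [hu'] at h2 | skip
          simpa using h2.symm)
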